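/- Consider the hazard model λ(t; a, x) = λ₀(t)·exp[μ₀(x) + 1{t ≥ a}·Q(a − d₀(x))·H₀(x)] with λ₀ continuous on [0, τ] and Q differentiable satisfying Q(u) ≥ Q(0) for all u and Q(0) < 0. Fix x with H₀(x) > 0 and t₀ with 0 ≤ t₀ < d₀(x) < τ, and assume λ₀(d₀(x)) > 0. Define m_{t₀}(a) = ∫_{t₀}^{τ} exp{ −Λ(t; a, x) + Λ(t₀; a, x) } dt for a ∈ (t₀, τ). Then there exists a ∈ (t₀, d₀(x)) with m_{t₀}(a) > m_{t₀}(d₀(x)); in particular, d₀(x) is not a maximizer of m_{t₀} on (t₀, τ), so the optimal rule d₀ for restricted mean residual lifetime at a₀ does not maximize the restricted mean residual lifetime at any earlier time t₀ < d₀(x). -/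

import Mathlib

open MeasureTheory

/-- Cumulative hazard `Λ(t; a, x) = ∫₀ᵗ λ₀(u)·exp(μ₀(x) + 1{u ≥ a}·Q(a − d₀(x))·H₀(x)) du`. -/
noncomputable def cumHaz {𝒳 : Type*} (lam0 : ℝ → ℝ) (μ0 H0 d0 : 𝒳 → ℝ) (Q : ℝ → ℝ)
    (x : 𝒳) (a t : ℝ) : ℝ :=
  ∫ u in (0:ℝ)..t, lam0 u * Real.exp (μ0 x + (if a ≤ u then Q (a - d0 x) * H0 x else 0))

/-- With `λ₀` continuous, `Q` differentiable with global minimum `Q(0) < 0`,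
`H₀(x) > 0`, `0 ≤ t₀ < d₀(x) < τ` and `λ₀(d₀(x)) > 0`, the rule `d₀` does not
maximize the restricted mean residual lifetime
`m_{t₀}(a) = ∫_{t₀}^{τ} exp(−Λ(t; a, x) + Λ(t₀; a, x)) dt` at the earlier
time `t₀ < d₀(x)`: there is `a ∈ (t₀, d₀(x))` with `m_{t₀}(a) > m_{t₀}(d₀(x))`. -/
theorem stmt_4 {𝒳 : Type*} (τ a₀ : ℝ) (ha₀ : 0 ≤ a₀) (hτ : a₀ ≤ τ)
    (lam0 : ℝ → ℝ) (hlam_cont : Continuous lam0) (hlam_nonneg : ∀ u, 0 ≤ lam0 u)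
    (μ0 H0 d0 : 𝒳 → ℝ) (hH0_nonneg : ∀ y, 0 ≤ H0 y)
    (hd0_range : ∀ y, d0 y ∈ Set.Icc 0 a₀)
    (Q Q' : ℝ → ℝ) (hQd : ∀ u, HasDerivAt Q (Q' u) u)
    (hQmin : ∀ u, Q 0 ≤ Q u) (hQ0 : Q 0 < 0)
    (x : 𝒳) (hH : 0 < H0 x)
    (t₀ : ℝ) (ht₀ : 0 ≤ t₀) (ht₀d : t₀ < d0 x) (hdτ : d0 x < τ)
    (hlam_pos : 0 < lam0 (d0 x)) :
    ∃ a ∈ Set.Ioo t₀ (d0 x),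
      (∫ t in t₀..τ,
        Real.exp (- cumHaz lam0 μ0 H0 d0 Q x (d0 x) t
                  + cumHaz lam0 μ0 H0 d0 Q x (d0 x) t₀))
      < ∫ t in t₀..τ,
          Real.exp (- cumHaz lam0 μ0 H0 d0 Q x a t + cumHaz lam0 μ0 H0 d0 Q x a t₀) := by
  classical
  set D := d0 x with hDdef
  set K := H0 x with hKdef
  set c := Real.exp (μ0 x) with hcdef
  have hc : 0 < c := Real.exp_pos _
  set φ : ℝ → ℝ := fun u => lam0 u * c with hφdef
  have hφc : Continuous φ := hlam_cont.mul continuous_const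
  have hφint : ∀ p q : ℝ, IntervalIntegrable φ volume p q := fun p q =>
    hφc.intervalIntegrable p q
  have hφnn : ∀ u, 0 ≤ φ u := fun u => mul_nonneg (hlam_nonneg u) hc.le
  set F : ℝ → ℝ → ℝ := fun p q => ∫ u in p..q, φ u with hFdef
  have hFadd : ∀ p q r : ℝ, F p q + F q r = F p r := fun p q r =>
    intervalIntegral.integral_add_adjacent_intervals (hφint p q) (hφint q r)
  have hFnn : ∀ p q : ℝ, p ≤ q → 0 ≤ F p q := fun p q h =>
    intervalIntegral.integral_nonneg h (fun u _ => hφnn u)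
  -- integrability of the hazard integrand
  have hmeas : ∀ b : ℝ, Measurable
      (fun u => lam0 u * Real.exp (μ0 x + if b ≤ u then Q (b - D) * K else 0)) := by
    intro b
    apply hlam_cont.measurable.mul
    apply (Real.continuous_exp.measurable).comp
    apply measurable_const.add
    exact Measurable.ite measurableSet_Ici measurable_const measurable_const
  have hint : ∀ b p q : ℝ, IntervalIntegrable
      (fun u => lam0 u * Real.exp (μ0 x + if b ≤ u then Q (b - D) * K else 0)) volume p q := by
    intro b p q
    have hbound : IntervalIntegrable
        (fun u => lam0 u * Real.exp (μ0 x + |Q (b - D) * K|)) volume p q :=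
      (hlam_cont.mul continuous_const).intervalIntegrable p q
    refine IntervalIntegrable.mono_fun hbound ((hmeas b).aestronglyMeasurable) ?_
    filter_upwards with u
    simp only [Real.norm_eq_abs]
    rw [abs_mul, abs_mul]
    refine mul_le_mul_of_nonneg_left ?_ (abs_nonneg _)
    rw [abs_of_pos (Real.exp_pos _), abs_of_pos (Real.exp_pos _)]
    refine Real.exp_le_exp.2 (add_le_add (le_refl _) ?_)
    by_cases hb : b ≤ u
    · rw [if_pos hb]; exact le_abs_self _
    · rw [if_neg hb]; exact abs_nonneg _
  have hae : ∀ b : ℝ, ∀ᵐ u : ℝ, u ≠ b := by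
    intro b
    refine (MeasureTheory.ae_iff).2 ?_
    simp only [not_not]
    simpa using measure_singleton (μ := (volume : Measure ℝ)) b
  -- splitting lemmas
  have hsplit_low : ∀ b t : ℝ, 0 ≤ t → t ≤ b →
      cumHaz lam0 μ0 H0 d0 Q x b t = F 0 t := by
    intro b t h0t htb
    rw [cumHaz, ← hDdef, ← hKdef]
    refine intervalIntegral.integral_congr_ae ?_
    filter_upwards [hae b] with u hub hu
    rw [Set.uIoc_of_le h0t] at hu
    have : ¬ b ≤ u := by
      intro h
      exact hub (le_antisymm (hu.2.trans htb) h)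
    rw [if_neg this, add_zero]
  have hsplit_high : ∀ b t : ℝ, 0 ≤ b → b ≤ t →
      cumHaz lam0 μ0 H0 d0 Q x b t
        = F 0 b + Real.exp (Q (b - D) * K) * F b t := by
    intro b t h0b hbt
    rw [cumHaz, ← hDdef, ← hKdef,
      ← intervalIntegral.integral_add_adjacent_intervals (hint b 0 b) (hint b b t)]
    congr 1
    · refine intervalIntegral.integral_congr_ae ?_
      filter_upwards [hae b] with u hub hu
      rw [Set.uIoc_of_le h0b] at hu
      have : ¬ b ≤ u := by
        intro h
        exact hub (le_antisymm hu.2 h)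
      rw [if_neg this, add_zero]
    · rw [hFdef, ← intervalIntegral.integral_const_mul]
      refine intervalIntegral.integral_congr ?_
      intro u hu
      rw [Set.uIcc_of_le hbt] at hu
      show lam0 u * Real.exp (μ0 x + if b ≤ u then Q (b - D) * K else 0)
          = Real.exp (Q (b - D) * K) * (lam0 u * c)
      rw [if_pos hu.1, Real.exp_add, hcdef]
      ring
  -- the treated-effect factor
  set E : ℝ → ℝ := fun b => Real.exp (Q (b - D) * K) with hEdef
  have hE0 : E D = Real.exp (Q 0 * K) := by rw [hEdef]; simp
  have hE0lt1 : E D < 1 := by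
    rw [hE0]
    exact Real.exp_lt_one_iff.2 (mul_neg_of_neg_of_pos hQ0 hH)
  have hQ'0 : Q' 0 = 0 := by
    have hmin : IsLocalMin Q 0 := Filter.Eventually.of_forall hQmin
    exact hmin.hasDerivAt_eq_zero (hQd 0)
  have hEderiv : HasDerivAt E 0 D := by
    have h0 : HasDerivAt Q (Q' 0) (D - D) := by rw [sub_self]; exact hQd 0
    have h2 : HasDerivAt (fun b : ℝ => Q (b - D)) (Q' 0) D :=
      HasDerivAt.comp_sub_const D D h0
    have h3 := (h2.mul_const K).exp
    rw [hEdef]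
    simpa [hQ'0] using h3
  -- lower bound on lam0 near D
  have hcont : ∀ᶠ u in nhds D, lam0 D / 2 < lam0 u :=
    (hlam_cont.tendsto D).eventually (eventually_gt_nhds (by linarith))
  obtain ⟨δ, hδpos, hδ⟩ := Metric.eventually_nhds_iff.1 hcont
  set m : ℝ := lam0 D / 2 * c with hmdef
  have hm : 0 < m := mul_pos (by linarith) hc
  set J : ℝ := F D τ with hJdef
  have hJ : 0 ≤ J := hFnn D τ hdτ.le
  set L : ℝ := max t₀ (D - δ) with hLdef
  have hLD : L < D := max_lt ht₀d (by linarith)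
  -- the comparison function G
  set G : ℝ → ℝ := fun b => (E b - 1) * (m * (D - b)) + (E b - E D) * J with hGdef
  have hGD : G D = 0 := by simp [hGdef]
  have hGderiv : HasDerivAt G (m * (1 - E D)) D := by
    have h1 : HasDerivAt (fun b : ℝ => m * (D - b)) (m * (0 - 1)) D :=
      ((hasDerivAt_const D D).sub (hasDerivAt_id D)).const_mul m
    have h2 := (hEderiv.sub_const 1).mul h1
    have h3 := (hEderiv.sub_const (E D)).mul_const J
    have h4 := h2.add h3
    rw [hGdef]
    convert h4 using 1
    · rfl
    · rfl
    · rfl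
    · ring
  have hG'pos : 0 < m * (1 - E D) := mul_pos hm (by linarith)
  -- choose a
  have hev1 : ∀ᶠ b in nhdsWithin D (Set.Iio D), 0 < slope G D b := by
    have h := (hasDerivAt_iff_tendsto_slope.1 hGderiv).eventually (eventually_gt_nhds hG'pos)
    refine h.filter_mono (nhdsWithin_mono D ?_)
    intro y hy
    simp only [Set.mem_compl_iff, Set.mem_singleton_iff]
    exact ne_of_lt hy
  have hev2 : ∀ᶠ b in nhdsWithin D (Set.Iio D), b ∈ Set.Ioo L D :=
    Filter.eventually_of_mem (Ioo_mem_nhdsLT_of_mem ⟨hLD, le_refl D⟩) (fun b hb => hb)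
  obtain ⟨a, hsl, haLD⟩ := (hev1.and hev2).exists
  obtain ⟨haL, haD⟩ := haLD
  have ht₀a : t₀ < a := lt_of_le_of_lt (le_max_left _ _) haL
  have hδa : D - δ < a := lt_of_le_of_lt (le_max_right _ _) haL
  have ha0 : 0 ≤ a := by linarith
  -- G a < 0
  have hGa : G a < 0 := by
    rw [slope_def_field, hGD, sub_zero] at hsl
    rcases div_pos_iff.1 hsl with ⟨h1, h2⟩ | ⟨h1, h2⟩
    · linarith
    · exact h1
  have hGa' : (E a - 1) * (m * (D - a)) + (E a - E D) * J < 0 := by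
    rw [hGdef] at hGa; exact hGa
  -- lower bound on F a D
  have hFaD : m * (D - a) ≤ F a D := by
    have hpt : ∀ u ∈ Set.Icc a D, m ≤ φ u := by
      intro u hu
      have hd : dist u D < δ := by
        rw [Real.dist_eq, abs_of_nonpos (by linarith [hu.2])]
        linarith [hu.1]
      exact mul_le_mul_of_nonneg_right (hδ hd).le hc.le
    calc m * (D - a) = ∫ _ in a..D, m := by
          rw [intervalIntegral.integral_const, smul_eq_mul]; ring
      _ ≤ F a D := intervalIntegral.integral_mono_on haD.le
          intervalIntegrable_const (hφint a D) hpt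
  have hEaED : E D ≤ E a := by
    rw [hE0, hEdef]
    exact Real.exp_le_exp.2 (mul_le_mul_of_nonneg_right (hQmin _) hH.le)
  have hEa1 : E a < 1 := by
    have h1 : 0 ≤ (E a - E D) * J := mul_nonneg (by linarith) hJ
    have h2 : (E a - 1) * (m * (D - a)) < 0 := by linarith
    have h3 : 0 < m * (D - a) := mul_pos hm (by linarith)
    by_contra hcon
    push_neg at hcon
    nlinarith [mul_nonneg (by linarith : (0:ℝ) ≤ E a - 1) h3.le]
  -- pointwise comparison of cumulative hazards
  have hle : ∀ t, t₀ ≤ t → t ≤ D →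
      cumHaz lam0 μ0 H0 d0 Q x a t ≤ cumHaz lam0 μ0 H0 d0 Q x D t := by
    intro t ht1 ht2
    have h0t : 0 ≤ t := le_trans ht₀ ht1
    rcases lt_or_ge t a with h | h
    · rw [hsplit_low a t h0t h.le, hsplit_low D t h0t ht2]
    · rw [hsplit_high a t ha0 h, hsplit_low D t h0t ht2, ← hFadd 0 a t]
      have h1 : 0 ≤ F a t := hFnn a t h
      have h2 : E a * F a t ≤ 1 * F a t := mul_le_mul_of_nonneg_right hEa1.le h1
      linarith
  have hlt : ∀ t, D ≤ t → t ≤ τ →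
      cumHaz lam0 μ0 H0 d0 Q x a t < cumHaz lam0 μ0 H0 d0 Q x D t := by
    intro t ht1 ht2
    rw [hsplit_high a t ha0 (le_trans haD.le ht1), hsplit_high D t (by linarith) ht1]
    rw [show Real.exp (Q (a - D) * K) = E a from rfl, show Real.exp (Q (D - D) * K) = E D from rfl]
    rw [← hFadd 0 a D, ← hFadd a D t]
    have hFDt : F D t ≤ J := by
      have := hFadd D t τ
      have h2 : 0 ≤ F t τ := hFnn t τ ht2
      rw [← hJdef] at this
      linarith
    have h1 : (E a - 1) * F a D ≤ (E a - 1) * (m * (D - a)) :=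
      mul_le_mul_of_nonpos_left hFaD (by linarith)
    have h2 : (E a - E D) * F D t ≤ (E a - E D) * J :=
      mul_le_mul_of_nonneg_left hFDt (by linarith)
    linarith [h1, h2, hGa']
  have ht₀eq : cumHaz lam0 μ0 H0 d0 Q x a t₀ = cumHaz lam0 μ0 H0 d0 Q x D t₀ := by
    rw [hsplit_low a t₀ ht₀ ht₀a.le, hsplit_low D t₀ ht₀ ht₀d.le]
  -- continuity of the integrands
  have hcontHaz : ∀ b : ℝ, Continuous (fun t => cumHaz lam0 μ0 H0 d0 Q x b t) := by
    intro b
    have : Continuous (fun t => ∫ u in (0:ℝ)..t,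
        lam0 u * Real.exp (μ0 x + if b ≤ u then Q (b - D) * K else 0)) :=
      intervalIntegral.continuous_primitive (fun p q => hint b p q) 0
    exact this
  set fa : ℝ → ℝ := fun t => Real.exp (- cumHaz lam0 μ0 H0 d0 Q x a t
      + cumHaz lam0 μ0 H0 d0 Q x a t₀) with hfadef
  set fD : ℝ → ℝ := fun t => Real.exp (- cumHaz lam0 μ0 H0 d0 Q x D t
      + cumHaz lam0 μ0 H0 d0 Q x D t₀) with hfDdef
  have hconta : Continuous fa :=
    Real.continuous_exp.comp (((hcontHaz a).neg).add continuous_const)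
  have hcontD : Continuous fD :=
    Real.continuous_exp.comp (((hcontHaz D).neg).add continuous_const)
  have hsub_int : ∀ p q : ℝ, IntervalIntegrable (fun t => fa t - fD t) volume p q :=
    fun p q => (hconta.sub hcontD).intervalIntegrable p q
  have key : 0 < ∫ t in t₀..τ, (fa t - fD t) := by
    rw [← intervalIntegral.integral_add_adjacent_intervals (hsub_int t₀ D) (hsub_int D τ)]
    have hnn : 0 ≤ ∫ t in t₀..D, (fa t - fD t) := by
      refine intervalIntegral.integral_nonneg ht₀d.le ?_
      intro t ht
      have := hle t ht.1 ht.2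
      simp only [hfadef, hfDdef, sub_nonneg]
      apply Real.exp_le_exp.2
      rw [ht₀eq]
      linarith
    have hpos : 0 < ∫ t in D..τ, (fa t - fD t) := by
      refine intervalIntegral.intervalIntegral_pos_of_pos_on (hsub_int D τ) ?_ hdτ
      intro t ht
      have := hlt t ht.1.le ht.2.le
      simp only [hfadef, hfDdef, sub_pos]
      apply Real.exp_lt_exp.2
      rw [ht₀eq]
      linarith
    linarith
  refine ⟨a, ⟨ht₀a, haD⟩, ?_⟩
  show (∫ t in t₀..τ, fD t) < ∫ t in t₀..τ, fa t
  rw [intervalIntegral.integral_sub (hconta.intervalIntegrable t₀ τ)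
    (hcontD.intervalIntegrable t₀ τ)] at key
  linarith
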